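/- Let x* ∈ C with Ax* ∈ D, and suppose the pair {C, A⁻¹D} has a linearly regular intersection with respect to A at x*. Then there exist c > 0 and ε > 0 such that for every x ∈ C with ‖x − x*‖ ≤ ε, every η ∈ Proj_D(Ax), and every v ∈ N_C(x), one has ‖Aᵀ(Ax − η) + v‖ ≥ c·d(Ax, D). Equivalently (since F(x) = ½ d(Ax, D)² on C and F(x*) = 0, and all elements of ∂F(x) have the form Aᵀ(Ax − η) + v), the function F has the Kurdyka–Łojasiewicz property with exponent ½ at x*. -/
import Mathlib


open Filter Topology Metric
open scoped RealInnerProductSpace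

noncomputable section

/-- The set of projections of `y` onto `S`. -/
def projSet {E : Type*} [NormedAddCommGroup E] (S : Set E) (y : E) : Set E :=
  {z | z ∈ S ∧ dist y z = Metric.infDist y S}

/-- The horizon cone of `S`. -/
def horizonCone {E : Type*} [NormedAddCommGroup E] [NormedSpace ℝ E] (S : Set E) : Set E :=
  {x | ∃ (u : ℕ → E) (β : ℕ → ℝ), (∀ t, u t ∈ S) ∧ (∀ t, 0 < β t) ∧
    Tendsto β atTop (𝓝 (0 : ℝ)) ∧ Tendsto (fun t => β t • u t) atTop (𝓝 x)}

/-- The regular (Fréchet) normal cone to `S` at `x`. -/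
def regNormalCone {E : Type*} [NormedAddCommGroup E] [InnerProductSpace ℝ E]
    (S : Set E) (x : E) : Set E :=
  {v | x ∈ S ∧ ∀ ε > 0, ∃ δ > 0, ∀ u ∈ S, ‖u - x‖ < δ → ⟪v, u - x⟫ ≤ ε * ‖u - x‖}

/-- The limiting normal cone to `S` at `x`. -/
def normalCone {E : Type*} [NormedAddCommGroup E] [InnerProductSpace ℝ E]
    (S : Set E) (x : E) : Set E :=
  {v | x ∈ S ∧ ∃ (xs vs : ℕ → E), (∀ t, vs t ∈ regNormalCone S (xs t)) ∧
    Tendsto xs atTop (𝓝 x) ∧ Tendsto vs atTop (𝓝 v)}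

/-- The regular (Fréchet) subdifferential at `x` of the function `φ + δ_C`
(the real-valued function `φ` plus the indicator of `C`). -/
def regSubdiff {E : Type*} [NormedAddCommGroup E] [InnerProductSpace ℝ E]
    (φ : E → ℝ) (C : Set E) (x : E) : Set E :=
  {v | x ∈ C ∧ ∀ ε > 0, ∃ δ > 0, ∀ u ∈ C, ‖u - x‖ < δ →
      φ u - φ x - ⟪v, u - x⟫ ≥ -(ε * ‖u - x‖)}

/-- The limiting subdifferential at `x` of the function `φ + δ_C`. -/
def limSubdiff {E : Type*} [NormedAddCommGroup E] [InnerProductSpace ℝ E]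
    (φ : E → ℝ) (C : Set E) (x : E) : Set E :=
  {v | x ∈ C ∧ ∃ (xs vs : ℕ → E), (∀ t, vs t ∈ regSubdiff φ C (xs t)) ∧
    Tendsto xs atTop (𝓝 x) ∧ Tendsto (fun t => φ (xs t)) atTop (𝓝 (φ x)) ∧
    Tendsto vs atTop (𝓝 v)}

/-- The smooth part `x ↦ ½ d(Ax, D)²` of the split-feasibility objective
`F = ½ d(A·, D)² + δ_C`. -/
def phiF {n m : ℕ} (A : EuclideanSpace ℝ (Fin n) →L[ℝ] EuclideanSpace ℝ (Fin m))
    (D : Set (EuclideanSpace ℝ (Fin m))) (x : EuclideanSpace ℝ (Fin n)) : ℝ :=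
  Metric.infDist (A x) D ^ 2 / 2

/-- A polyhedral set: an intersection of finitely many closed half-spaces. -/
def IsPolyhedral {E : Type*} [NormedAddCommGroup E] [InnerProductSpace ℝ E] (S : Set E) : Prop :=
  ∃ (k : ℕ) (a : Fin k → E) (b : Fin k → ℝ), S = {x | ∀ i, ⟪a i, x⟫ ≤ b i}

end

section AuxLemmas
open Filter Topology Metric
open scoped RealInnerProductSpace
noncomputable section
variable {E : Type*} [NormedAddCommGroup E] [InnerProductSpace ℝ E]

lemma prox_normal {D : Set E} {y η : E} (h : η ∈ projSet D y) :
    y - η ∈ regNormalCone D η := by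
  obtain ⟨hηD, hd⟩ := h
  refine ⟨hηD, fun ε hε => ⟨2 * ε, by linarith, fun u hu hlt => ?_⟩⟩
  have h1 : dist y η ≤ dist y u := hd ▸ Metric.infDist_le_dist_of_mem hu
  rw [dist_eq_norm, dist_eq_norm] at h1
  have h2 : ‖y - η‖ ^ 2 ≤ ‖y - u‖ ^ 2 := by
    nlinarith [norm_nonneg (y - η), norm_nonneg (y - u)]
  have e : ‖y - u‖ ^ 2 = ‖y - η‖ ^ 2 - 2 * ⟪y - η, u - η⟫ + ‖u - η‖ ^ 2 := by
    have e2 : y - u = (y - η) - (u - η) := by abel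
    rw [e2, norm_sub_sq_real]
  nlinarith [norm_nonneg (u - η)]

lemma regNormalCone_smul {S : Set E} {x v : E} {c : ℝ} (hc : 0 < c)
    (h : v ∈ regNormalCone S x) : c • v ∈ regNormalCone S x := by
  obtain ⟨hx, hv⟩ := h
  refine ⟨hx, fun ε hε => ?_⟩
  obtain ⟨δ, hδ, hb⟩ := hv (ε / c) (by positivity)
  refine ⟨δ, hδ, fun u hu hlt => ?_⟩
  rw [real_inner_smul_left]
  have h1 := hb u hu hlt
  calc c * ⟪v, u - x⟫ ≤ c * (ε / c * ‖u - x‖) :=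
        mul_le_mul_of_nonneg_left h1 hc.le
    _ = ε * ‖u - x‖ := by field_simp

lemma regNormalCone_subset_normalCone {S : Set E} {x v : E}
    (h : v ∈ regNormalCone S x) : v ∈ normalCone S x :=
  ⟨h.1, fun _ => x, fun _ => v, fun _ => h, tendsto_const_nhds, tendsto_const_nhds⟩

lemma normalCone_smul {S : Set E} {x v : E} {c : ℝ} (hc : 0 < c)
    (h : v ∈ normalCone S x) : c • v ∈ normalCone S x := by
  obtain ⟨hx, xs, vs, hm, hxs, hvs⟩ := h
  exact ⟨hx, xs, fun t => c • vs t, fun t => regNormalCone_smul hc (hm t), hxs,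
    hvs.const_smul c⟩

lemma normalCone_limit {S : Set E} {p q : ℕ → E} {x v : E} (hx : x ∈ S)
    (hq : ∀ t, q t ∈ normalCone S (p t))
    (hp : Tendsto p atTop (𝓝 x)) (hqv : Tendsto q atTop (𝓝 v)) :
    v ∈ normalCone S x := by
  have key : ∀ t : ℕ, ∃ pr : E × E, pr.2 ∈ regNormalCone S pr.1 ∧
      dist pr.1 (p t) < 1 / (t + 1) ∧ dist pr.2 (q t) < 1 / (t + 1) := by
    intro t
    obtain ⟨-, xs, vs, hm, hxs, hvs⟩ := hq t
    have h1 : ∀ᶠ s in atTop, dist (xs s) (p t) < 1 / (t + 1) :=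
      (Metric.tendsto_nhds.mp hxs _ (by positivity))
    have h2 : ∀ᶠ s in atTop, dist (vs s) (q t) < 1 / (t + 1) :=
      (Metric.tendsto_nhds.mp hvs _ (by positivity))
    obtain ⟨s, hs1, hs2⟩ := (h1.and h2).exists
    exact ⟨(xs s, vs s), hm s, hs1, hs2⟩
  choose pr hmem hd1 hd2 using key
  have hz : Tendsto (fun t : ℕ => (1 : ℝ) / (t + 1)) atTop (𝓝 0) :=
    tendsto_one_div_add_atTop_nhds_zero_nat
  have hplim : Tendsto (fun t => dist (p t) x) atTop (𝓝 0) :=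
    tendsto_iff_dist_tendsto_zero.mp hp
  have hqlim : Tendsto (fun t => dist (q t) v) atTop (𝓝 0) :=
    tendsto_iff_dist_tendsto_zero.mp hqv
  have hg1 : Tendsto (fun t : ℕ => 1 / (t + 1 : ℝ) + dist (p t) x) atTop (𝓝 0) := by
    simpa using hz.add hplim
  have hg2 : Tendsto (fun t : ℕ => 1 / (t + 1 : ℝ) + dist (q t) v) atTop (𝓝 0) := by
    simpa using hz.add hqlim
  refine ⟨hx, fun t => (pr t).1, fun t => (pr t).2, hmem, ?_, ?_⟩
  · rw [tendsto_iff_dist_tendsto_zero]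
    refine squeeze_zero (fun t => dist_nonneg) (fun t => ?_) hg1
    calc dist (pr t).1 x ≤ dist (pr t).1 (p t) + dist (p t) x := dist_triangle _ _ _
      _ ≤ 1 / (t + 1) + dist (p t) x := by linarith [hd1 t]
  · rw [tendsto_iff_dist_tendsto_zero]
    refine squeeze_zero (fun t => dist_nonneg) (fun t => ?_) hg2
    calc dist (pr t).2 v ≤ dist (pr t).2 (q t) + dist (q t) v := dist_triangle _ _ _
      _ ≤ 1 / (t + 1) + dist (q t) v := by linarith [hd2 t]

lemma regSubdiff_decomp {n m : ℕ}
    (A : EuclideanSpace ℝ (Fin n) →L[ℝ] EuclideanSpace ℝ (Fin m))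
    (C : Set (EuclideanSpace ℝ (Fin n))) (D : Set (EuclideanSpace ℝ (Fin m)))
    {x w : EuclideanSpace ℝ (Fin n)} (hw : w ∈ regSubdiff (phiF A D) C x)
    {η : EuclideanSpace ℝ (Fin m)} (hη : η ∈ projSet D (A x)) :
    w - (ContinuousLinearMap.adjoint A) (A x - η) ∈ regNormalCone C x := by
  obtain ⟨hxC, hsub⟩ := hw
  refine ⟨hxC, fun ε hε => ?_⟩
  obtain ⟨δ, hδ, hb⟩ := hsub (ε / 2) (by linarith)
  refine ⟨min δ (ε / (‖A‖ ^ 2 + 1)), lt_min hδ (by positivity), fun u hu hlt => ?_⟩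
  have hlt1 : ‖u - x‖ < δ := hlt.trans_le (min_le_left _ _)
  have hlt2 : ‖u - x‖ ≤ ε / (‖A‖ ^ 2 + 1) := (hlt.trans_le (min_le_right _ _)).le
  have h1 := hb u hu hlt1
  -- phi u ≤ ‖A u - η‖²/2
  have hphix : phiF A D x = ‖A x - η‖ ^ 2 / 2 := by
    rw [phiF, ← hη.2, dist_eq_norm]
  have hdle : infDist (A u) D ≤ ‖A u - η‖ := by
    rw [← dist_eq_norm]; exact Metric.infDist_le_dist_of_mem hη.1
  have hphiu : phiF A D u ≤ ‖A u - η‖ ^ 2 / 2 := by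
    rw [phiF]
    have h0 : (0:ℝ) ≤ infDist (A u) D := Metric.infDist_nonneg
    nlinarith
  have hexp : ‖A u - η‖ ^ 2 =
      ‖A x - η‖ ^ 2 + 2 * ⟪A x - η, A u - A x⟫ + ‖A u - A x‖ ^ 2 := by
    have e2 : A u - η = (A x - η) + (A u - A x) := by abel
    rw [e2, norm_add_sq_real]
  have hop : ‖A u - A x‖ ≤ ‖A‖ * ‖u - x‖ := by
    rw [← map_sub]; exact A.le_opNorm _
  have hinner : ⟪w - (ContinuousLinearMap.adjoint A) (A x - η), u - x⟫ =
      ⟪w, u - x⟫ - ⟪A x - η, A u - A x⟫ := by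
    rw [inner_sub_left, ContinuousLinearMap.adjoint_inner_left, map_sub]
  rw [hinner]
  have hA2 : ‖A‖ ^ 2 * ‖u - x‖ ≤ ε := by
    have hpos : (0:ℝ) < ‖A‖ ^ 2 + 1 := by positivity
    have h3 : ‖u - x‖ * (‖A‖ ^ 2 + 1) ≤ ε := by
      rw [← le_div_iff₀ hpos]; exact hlt2
    nlinarith [norm_nonneg (u - x)]
  have hnn : (0:ℝ) ≤ ‖u - x‖ := norm_nonneg _
  have hAnn : (0:ℝ) ≤ ‖A‖ := norm_nonneg _
  nlinarith [sq_nonneg (‖A u - A x‖), mul_le_mul_of_nonneg_left hop hAnn,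
    mul_le_mul hop hop (norm_nonneg _) (by positivity : (0:ℝ) ≤ ‖A‖ * ‖u - x‖)]
end
end AuxLemmas

/-- Under linearly regular intersection of `{C, A⁻¹D}` with respect to `A`
at `x*`: there exist `c > 0` and `ε > 0` such that `‖Aᵀ(Ax − η) + v‖ ≥ c·d(Ax, D)` for all
`x ∈ C` near `x*`, `η ∈ Proj_D(Ax)` and `v ∈ N_C(x)`; equivalently, `F = ½ d(A·, D)² + δ_C`
has the KL property with exponent `½` at `x*`. -/
theorem stmt_15 (n m : ℕ)
    (A : EuclideanSpace ℝ (Fin n) →L[ℝ] EuclideanSpace ℝ (Fin m))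
    (C : Set (EuclideanSpace ℝ (Fin n))) (D : Set (EuclideanSpace ℝ (Fin m)))
    (hCne : C.Nonempty) (hCcl : IsClosed C) (hDne : D.Nonempty) (hDcl : IsClosed D)
    (xstar : EuclideanSpace ℝ (Fin n)) (hxsC : xstar ∈ C) (hxsD : A xstar ∈ D)
    (hreg : ∀ w v, w ∈ normalCone D (A xstar) → v ∈ normalCone C xstar →
      (ContinuousLinearMap.adjoint A) w + v = 0 → w = 0 ∧ v = 0) :
    (∃ c > (0 : ℝ), ∃ ε > (0 : ℝ), ∀ x ∈ C, ‖x - xstar‖ ≤ ε →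
      ∀ η ∈ projSet D (A x), ∀ v ∈ normalCone C x,
        ‖(ContinuousLinearMap.adjoint A) (A x - η) + v‖ ≥ c * Metric.infDist (A x) D) ∧
    (∃ c₀ > (0 : ℝ), ∃ ε > (0 : ℝ), ∃ s > (0 : ℝ), ∀ x ∈ C, ‖x - xstar‖ ≤ ε →
      0 < phiF A D x - phiF A D xstar → phiF A D x - phiF A D xstar < s →
      ∀ w ∈ limSubdiff (phiF A D) C x,
        ‖w‖ ≥ c₀ * Real.sqrt (phiF A D x - phiF A D xstar)) := by

  classical
  have part1 : ∃ c > (0 : ℝ), ∃ ε > (0 : ℝ), ∀ x ∈ C, ‖x - xstar‖ ≤ ε →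
      ∀ η ∈ projSet D (A x), ∀ v ∈ normalCone C x,
        ‖(ContinuousLinearMap.adjoint A) (A x - η) + v‖ ≥ c * Metric.infDist (A x) D := by
    by_contra hcon
    push_neg at hcon
    have key : ∀ t : ℕ, ∃ x ∈ C, ‖x - xstar‖ ≤ 1 / (t + 1) ∧ ∃ η ∈ projSet D (A x),
        ∃ v ∈ normalCone C x, ‖(ContinuousLinearMap.adjoint A) (A x - η) + v‖ <
          (1 / (t + 1)) * Metric.infDist (A x) D := by
      intro t
      exact hcon (1 / (t + 1)) (by positivity) (1 / (t + 1)) (by positivity)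
    choose x hxC hxnear η hη v hv hlt using key
    set d : ℕ → ℝ := fun t => Metric.infDist (A (x t)) D with hdd
    have hd : ∀ t, 0 < d t := by
      intro t
      by_contra hdt
      push_neg at hdt
      have h0 : d t = 0 := le_antisymm hdt Metric.infDist_nonneg
      have := hlt t
      rw [show Metric.infDist (A (x t)) D = d t from rfl, h0, mul_zero] at this
      exact absurd this (not_lt.mpr (norm_nonneg _))
    set w : ℕ → EuclideanSpace ℝ (Fin m) := fun t => (d t)⁻¹ • (A (x t) - η t) with hww
    set u : ℕ → EuclideanSpace ℝ (Fin n) := fun t => (d t)⁻¹ • (v t) with huu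
    have hdist : ∀ t, ‖A (x t) - η t‖ = d t := by
      intro t
      rw [← dist_eq_norm]
      exact (hη t).2
    have hwnorm : ∀ t, ‖w t‖ = 1 := by
      intro t
      rw [hww]
      simp only [norm_smul, Real.norm_eq_abs, abs_of_pos (inv_pos.mpr (hd t)), hdist t]
      exact inv_mul_cancel₀ (hd t).ne'
    have hwmem : ∀ t, w t ∈ regNormalCone D (η t) := fun t =>
      regNormalCone_smul (inv_pos.mpr (hd t)) (prox_normal (hη t))
    have humem : ∀ t, u t ∈ normalCone C (x t) := fun t =>
      normalCone_smul (inv_pos.mpr (hd t)) (hv t)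
    have hsum : ∀ t, ‖(ContinuousLinearMap.adjoint A) (w t) + u t‖ < 1 / (t + 1) := by
      intro t
      have e : (ContinuousLinearMap.adjoint A) (w t) + u t =
          (d t)⁻¹ • ((ContinuousLinearMap.adjoint A) (A (x t) - η t) + v t) := by
        rw [hww, huu]; simp [map_smul, smul_add]
      rw [e, norm_smul, Real.norm_eq_abs, abs_of_pos (inv_pos.mpr (hd t))]
      have h1 := hlt t
      have h2 : (d t)⁻¹ * ‖(ContinuousLinearMap.adjoint A) (A (x t) - η t) + v t‖ <
          (d t)⁻¹ * ((1 / (t + 1)) * d t) :=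
        mul_lt_mul_of_pos_left h1 (inv_pos.mpr (hd t))
      calc (d t)⁻¹ * ‖(ContinuousLinearMap.adjoint A) (A (x t) - η t) + v t‖
          < (d t)⁻¹ * ((1 / (t + 1)) * d t) := h2
        _ = 1 / (t + 1) := by field_simp [(hd t).ne']
    have hxlim : Tendsto x atTop (𝓝 xstar) := by
      rw [tendsto_iff_dist_tendsto_zero]
      refine squeeze_zero (fun t => dist_nonneg) (fun t => ?_)
        tendsto_one_div_add_atTop_nhds_zero_nat
      rw [dist_eq_norm]; exact hxnear t
    have hAxlim : Tendsto (fun t => A (x t)) atTop (𝓝 (A xstar)) :=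
      (A.continuous.tendsto _).comp hxlim
    have hηlim : Tendsto η atTop (𝓝 (A xstar)) := by
      rw [tendsto_iff_dist_tendsto_zero]
      have hg : Tendsto (fun t => 2 * dist (A (x t)) (A xstar)) atTop (𝓝 0) := by
        have := (tendsto_iff_dist_tendsto_zero.mp hAxlim).const_mul (2 : ℝ)
        simpa using this
      refine squeeze_zero (fun t => dist_nonneg) (fun t => ?_) hg
      have h1 : dist (η t) (A (x t)) = d t := by rw [dist_comm]; exact (hη t).2
      have h2 : d t ≤ dist (A (x t)) (A xstar) := Metric.infDist_le_dist_of_mem hxsD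
      calc dist (η t) (A xstar) ≤ dist (η t) (A (x t)) + dist (A (x t)) (A xstar) :=
            dist_triangle _ _ _
        _ ≤ 2 * dist (A (x t)) (A xstar) := by rw [h1]; linarith
    obtain ⟨winf, hwinfsph, ψ, hψ, hwlim⟩ :=
      (isCompact_sphere (0 : EuclideanSpace ℝ (Fin m)) 1).tendsto_subseq
        (fun t => mem_sphere_zero_iff_norm.mpr (hwnorm t))
    have hsumlim : Tendsto (fun t => (ContinuousLinearMap.adjoint A) (w (ψ t)) + u (ψ t))
        atTop (𝓝 0) := by
      rw [tendsto_zero_iff_norm_tendsto_zero]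
      refine squeeze_zero (fun t => norm_nonneg _) (fun t => ?_)
        tendsto_one_div_add_atTop_nhds_zero_nat
      have h1 := (hsum (ψ t)).le
      have h2 : (1 : ℝ) / (ψ t + 1) ≤ 1 / (t + 1) := by
        apply one_div_le_one_div_of_le (by positivity)
        have h3 : (t : ℝ) ≤ ψ t := by exact_mod_cast hψ.le_apply (x := t)
        linarith
      linarith
    have hAdjlim : Tendsto (fun t => (ContinuousLinearMap.adjoint A) (w (ψ t))) atTop
        (𝓝 ((ContinuousLinearMap.adjoint A) winf)) :=
      ((ContinuousLinearMap.adjoint A).continuous.tendsto _).comp hwlim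
    have hulim : Tendsto (fun t => u (ψ t)) atTop
        (𝓝 (-(ContinuousLinearMap.adjoint A) winf)) := by
      have := hsumlim.sub hAdjlim
      have e : (fun t => ((ContinuousLinearMap.adjoint A) (w (ψ t)) + u (ψ t)) -
          (ContinuousLinearMap.adjoint A) (w (ψ t))) = fun t => u (ψ t) := by
        funext t; abel
      rw [e, zero_sub] at this
      exact this
    have hwinfcone : winf ∈ normalCone D (A xstar) :=
      ⟨hxsD, fun t => η (ψ t), fun t => w (ψ t), fun t => hwmem (ψ t),
        hηlim.comp hψ.tendsto_atTop, hwlim⟩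
    have hvinfcone : -(ContinuousLinearMap.adjoint A) winf ∈ normalCone C xstar :=
      normalCone_limit hxsC (fun t => humem (ψ t)) (hxlim.comp hψ.tendsto_atTop) hulim
    have h0 := hreg winf (-(ContinuousLinearMap.adjoint A) winf) hwinfcone hvinfcone
      (add_neg_cancel _)
    have h1 : ‖winf‖ = 1 := mem_sphere_zero_iff_norm.mp hwinfsph
    rw [h0.1, norm_zero] at h1
    exact zero_ne_one h1
  obtain ⟨c, hc, ε, hε, hball⟩ := part1
  refine ⟨⟨c, hc, ε, hε, hball⟩, c, hc, ε / 2, by linarith, 1, one_pos, ?_⟩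
  intro x hxC hxnear hpos hslt w hw
  obtain ⟨hxC', xs, ws, hm, hxs, hphi, hws⟩ := hw
  have hstar0 : phiF A D xstar = 0 := by
    simp [phiF, Metric.infDist_zero_of_mem hxsD]
  have hev : ∀ᶠ s in atTop, c * Metric.infDist (A (xs s)) D ≤ ‖ws s‖ := by
    filter_upwards [Metric.tendsto_nhds.mp hxs (ε / 2) (by linarith)] with s hs
    have hnear : ‖xs s - xstar‖ ≤ ε := by
      rw [← dist_eq_norm]
      calc dist (xs s) xstar ≤ dist (xs s) x + dist x xstar := dist_triangle _ _ _
        _ ≤ ε / 2 + ε / 2 := by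
            rw [dist_eq_norm x xstar]; exact add_le_add hs.le hxnear
        _ = ε := by ring
    obtain ⟨η, hηD, hηd⟩ := hDcl.exists_infDist_eq_dist hDne (A (xs s))
    have hηproj : η ∈ projSet D (A (xs s)) := ⟨hηD, hηd.symm⟩
    have hvmem := regNormalCone_subset_normalCone (regSubdiff_decomp A C D (hm s) hηproj)
    have hb := hball (xs s) (hm s).1 hnear η hηproj _ hvmem
    have e : (ContinuousLinearMap.adjoint A) (A (xs s) - η) +
        (ws s - (ContinuousLinearMap.adjoint A) (A (xs s) - η)) = ws s := by abel
    rw [e] at hb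
    exact hb
  have h1 : Tendsto (fun s => c * Metric.infDist (A (xs s)) D) atTop
      (𝓝 (c * Metric.infDist (A x) D)) := by
    have h2 : Tendsto (fun s => Metric.infDist (A (xs s)) D) atTop
        (𝓝 (Metric.infDist (A x) D)) :=
      ((continuous_infDist_pt D).tendsto _).comp ((A.continuous.tendsto _).comp hxs)
    exact h2.const_mul c
  have hle : c * Metric.infDist (A x) D ≤ ‖w‖ :=
    le_of_tendsto_of_tendsto h1 hws.norm hev
  have hsq : Real.sqrt (phiF A D x - phiF A D xstar) ≤ Metric.infDist (A x) D := by
    rw [hstar0, sub_zero]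
    have hdnn : (0 : ℝ) ≤ Metric.infDist (A x) D := Metric.infDist_nonneg
    calc Real.sqrt (phiF A D x) ≤ Real.sqrt (Metric.infDist (A x) D ^ 2) := by
          apply Real.sqrt_le_sqrt
          rw [phiF]
          nlinarith
      _ = Metric.infDist (A x) D := Real.sqrt_sq hdnn
  calc c * Real.sqrt (phiF A D x - phiF A D xstar) ≤ c * Metric.infDist (A x) D :=
        mul_le_mul_of_nonneg_left hsq hc.le
    _ ≤ ‖w‖ := hle
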